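/- arXiv:2105.04138 — 4 statements merged into one kernel-verified Lean document; each statement's English description precedes it below -/
import Mathlib

section
/- Let G be a simple graph on a finite vertex type V, let N and l be natural numbers with l ≥ 1, and let f : ZMod (2l+1) → V be an injective map forming an empty odd cycle in G, i.e., for all i ≠ j, f(i) and f(j) are adjacent in G if and only if j = i + 1 or i = j + 1 (indices in ZMod (2l+1)). Let T : V → Finset (Fin N) be a schedule such that adjacent vertices have disjoint slot sets. Then ∑_{i ∈ ZMod (2l+1)} |T(f(i))| ≤ l · N. -/
theorem empty_odd_cycle_schedule_sum_le
    {V : Type*} [Fintype V] (G : SimpleGraph V) (N l : ℕ) (hl : 1 ≤ l)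
    (f : ZMod (2 * l + 1) → V) (hf : Function.Injective f)
    (hcyc : ∀ i j : ZMod (2 * l + 1), i ≠ j →
      (G.Adj (f i) (f j) ↔ (j = i + 1 ∨ i = j + 1)))
    (T : V → Finset (Fin N))
    (hT : ∀ u v : V, G.Adj u v → Disjoint (T u) (T v)) :
    ∑ i : ZMod (2 * l + 1), (T (f i)).card ≤ l * N := by
  classical
  haveI : NeZero (2 * l + 1) := ⟨by omega⟩
  haveI : Fact (1 < 2 * l + 1) := ⟨by omega⟩
  have hone : (1 : ZMod (2 * l + 1)) ≠ 0 := one_ne_zero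
  have hsucc : ∀ i : ZMod (2 * l + 1), i ≠ i + 1 := by
    intro i h
    exact hone (left_eq_add.mp h)
  have hadj : ∀ i : ZMod (2 * l + 1), G.Adj (f i) (f (i + 1)) := by
    intro i
    exact (hcyc i (i + 1) (hsucc i)).mpr (Or.inl rfl)
  -- key independent-set bound
  have key : ∀ t : Fin N,
      (Finset.univ.filter (fun i : ZMod (2 * l + 1) => t ∈ T (f i))).card ≤ l := by
    intro t
    set S := Finset.univ.filter (fun i : ZMod (2 * l + 1) => t ∈ T (f i)) with hS
    have hno : ∀ i : ZMod (2 * l + 1), i ∈ S → i + 1 ∉ S := by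
      intro i hi hi1
      have h1 : t ∈ T (f i) := (Finset.mem_filter.mp hi).2
      have h2 : t ∈ T (f (i + 1)) := (Finset.mem_filter.mp hi1).2
      exact (hT _ _ (hadj i)).forall_ne_finset h1 h2 rfl
    have hdisj : Disjoint S (S.image (· + 1)) := by
      rw [Finset.disjoint_left]
      intro x hx hx'
      obtain ⟨y, hy, hyx⟩ := Finset.mem_image.mp hx'
      subst hyx
      exact hno y hy hx
    have hcard : S.card + S.card ≤ 2 * l + 1 := by
      have himg : (S.image (· + 1)).card = S.card :=
        Finset.card_image_of_injective _ (add_left_injective 1)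
      have : (S ∪ S.image (· + 1)).card ≤ (Finset.univ : Finset (ZMod (2 * l + 1))).card :=
        Finset.card_le_card (Finset.subset_univ _)
      rw [Finset.card_union_of_disjoint hdisj, himg, Finset.card_univ, ZMod.card] at this
      exact this
    omega
  -- double counting
  have hswap : ∑ i : ZMod (2 * l + 1), (T (f i)).card
      = ∑ t : Fin N, (Finset.univ.filter (fun i : ZMod (2 * l + 1) => t ∈ T (f i))).card := by
    have h1 : ∀ i : ZMod (2 * l + 1),
        (T (f i)).card = ∑ t : Fin N, if t ∈ T (f i) then 1 else 0 := by
      intro i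
      rw [Finset.sum_ite_mem, Finset.univ_inter, Finset.sum_const, smul_eq_mul, mul_one]
    simp_rw [h1]
    rw [Finset.sum_comm]
    congr 1
    ext t
    exact (Finset.card_filter _ _).symm
  rw [hswap]
  calc ∑ t : Fin N, (Finset.univ.filter (fun i : ZMod (2 * l + 1) => t ∈ T (f i))).card
      ≤ ∑ _t : Fin N, l := Finset.sum_le_sum fun t _ => key t
    _ = N * l := by simp [Finset.sum_const, mul_comm]
    _ = l * N := mul_comm N l
end

section
/- Let G be a simple graph on a finite vertex type V, let N and α be natural numbers, and let T : V → Finset (Fin N) be a schedule such that adjacent vertices have disjoint slot sets. If every independent set of G has cardinality at most α, then ∑_{v ∈ V} |T(v)| ≤ α · N. -/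
theorem schedule_sum_le_indepNumber_mul
    {V : Type*} [Fintype V] (G : SimpleGraph V) (N α : ℕ)
    (T : V → Finset (Fin N))
    (hT : ∀ u v : V, G.Adj u v → Disjoint (T u) (T v))
    (hα : ∀ S : Finset V, (∀ u ∈ S, ∀ v ∈ S, u ≠ v → ¬ G.Adj u v) → S.card ≤ α) :
    ∑ v : V, (T v).card ≤ α * N := by
  classical
  have key : ∑ v : V, (T v).card
      = ∑ n : Fin N, (Finset.univ.filter fun v => n ∈ T v).card := by
    simp_rw [Finset.card_filter, Finset.card_eq_sum_ones]
    rw [Finset.sum_comm]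
    simp
  rw [key]
  calc ∑ n : Fin N, (Finset.univ.filter fun v => n ∈ T v).card
      ≤ ∑ _n : Fin N, α := by
        refine Finset.sum_le_sum fun n _ => hα _ ?_
        intro u hu v hv huv hadj
        have := hT u v hadj
        simp only [Finset.mem_filter] at hu hv
        exact Finset.disjoint_left.mp this hu.2 hv.2
    _ = α * N := by simp [Finset.sum_const, mul_comm]
end

section
/- Let G be a simple graph on a finite vertex type V, let N be a natural number, d : V → ℕ a requirement function, and let S₁, …, S_m be pairwise disjoint cliques of G such that ∑_{v ∈ S_i} d(v) ≥ N for every i. Then for every schedule T : V → Finset (Fin N) in which adjacent vertices have disjoint slot sets and |T(v)| ≤ d(v) for all v, the total number of unfulfilled requirements satisfies ∑_{v ∈ V} (d(v) − |T(v)|) ≥ ∑_{i=1}^{m} ((∑_{v ∈ S_i} d(v)) − N) (as integers). -/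
theorem disjoint_cliques_unfulfilled_lower_bound
    {V : Type*} [Fintype V] (G : SimpleGraph V) (N : ℕ)
    (d : V → ℕ) (m : ℕ) (S : Fin m → Finset V)
    (hdisj : ∀ i j : Fin m, i ≠ j → Disjoint (S i) (S j))
    (hclique : ∀ i : Fin m, G.IsClique ((S i : Set V)))
    (hsum : ∀ i : Fin m, N ≤ ∑ v ∈ S i, d v)
    (T : V → Finset (Fin N))
    (hT : ∀ u v : V, G.Adj u v → Disjoint (T u) (T v))
    (hle : ∀ v : V, (T v).card ≤ d v) :
    ∑ v : V, ((d v : ℤ) - ((T v).card : ℤ)) ≥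
      ∑ i : Fin m, ((∑ v ∈ S i, (d v : ℤ)) - N) := by
  classical
  have key : ∀ i : Fin m, ∑ v ∈ S i, (T v).card ≤ N := by
    intro i
    have hdT : ∀ x ∈ S i, ∀ y ∈ S i, x ≠ y → Disjoint (T x) (T y) := by
      intro x hx y hy hxy
      exact hT x y (hclique i hx hy hxy)
    calc ∑ v ∈ S i, (T v).card = ((S i).biUnion T).card :=
          (Finset.card_biUnion hdT).symm
      _ ≤ Fintype.card (Fin N) := Finset.card_le_univ _
      _ = N := Fintype.card_fin N
  have hnn : ∀ v : V, (0 : ℤ) ≤ (d v : ℤ) - ((T v).card : ℤ) := by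
    intro v
    have := hle v
    omega
  have hstep : ∑ i : Fin m, ((∑ v ∈ S i, (d v : ℤ)) - N) ≤
      ∑ i : Fin m, ∑ v ∈ S i, ((d v : ℤ) - ((T v).card : ℤ)) := by
    apply Finset.sum_le_sum
    intro i _
    have h1 : ((∑ v ∈ S i, (T v).card : ℕ) : ℤ) ≤ (N : ℤ) := by
      exact_mod_cast key i
    push_cast at h1 ⊢
    rw [Finset.sum_sub_distrib]
    omega
  have hun : ∑ i : Fin m, ∑ v ∈ S i, ((d v : ℤ) - ((T v).card : ℤ)) =
      ∑ v ∈ Finset.univ.biUnion S, ((d v : ℤ) - ((T v).card : ℤ)) := by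
    rw [Finset.sum_biUnion]
    intro i _ j _ hij
    exact hdisj i j hij
  refine le_trans hstep ?_
  rw [hun]
  exact Finset.sum_le_sum_of_subset_of_nonneg (Finset.subset_univ _)
    (fun v _ _ => hnn v)
end

section
/- For every real number a > 0, the function f(x) = x · (2^{a/x} − 1) is strictly decreasing on the set of positive reals, i.e., StrictAntiOn (fun x => x * (2^{a/x} − 1)) (Set.Ioi 0). -/
theorem power_objective_strictAntiOn (a : ℝ) (ha : 0 < a) :
    StrictAntiOn (fun x : ℝ => x * ((2 : ℝ) ^ (a / x) - 1)) (Set.Ioi (0 : ℝ)) := by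
  have hL : (0:ℝ) < Real.log 2 := Real.log_pos (by norm_num)
  intro x hx y hy hxy
  simp only [Set.mem_Ioi] at hx hy
  -- v1 = (a/y) * log 2 < v2 = (a/x) * log 2
  set v1 := a / y * Real.log 2 with hv1
  set v2 := a / x * Real.log 2 with hv2
  have hv1pos : 0 < v1 := mul_pos (div_pos ha (hx.trans hxy)) hL
  have hv2pos : 0 < v2 := mul_pos (div_pos ha hx) hL
  have hvlt : v1 < v2 :=
    mul_lt_mul_of_pos_right (div_lt_div_of_pos_left ha hx hxy) hL
  have key := strictConvexOn_exp.secant_strict_mono (a := 0)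
    (Set.mem_univ _) (Set.mem_univ v1) (Set.mem_univ v2)
    (ne_of_gt hv1pos) (ne_of_gt hv2pos) hvlt
  simp only [Real.exp_zero, sub_zero] at key
  -- rewrite f in terms of the secant
  have hrw : ∀ z : ℝ, 0 < z →
      z * ((2 : ℝ) ^ (a / z) - 1)
        = (a * Real.log 2) * ((Real.exp (a / z * Real.log 2) - 1) / (a / z * Real.log 2)) := by
    intro z hz
    have hzne : a / z * Real.log 2 ≠ 0 := ne_of_gt (mul_pos (div_pos ha hz) hL)
    rw [Real.rpow_def_of_pos (by norm_num : (0:ℝ) < 2)]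
    field_simp
  have h1 := hrw y (hx.trans hxy)
  have h2 := hrw x hx
  simp only [h1, h2]
  rw [← hv1, ← hv2]
  exact mul_lt_mul_of_pos_left key (mul_pos ha hL)
end
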